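/- Let R = F_q[x_1,...,x_m]/I with a weight function ρ whose value semigroup is enumerated increasingly as (ρ_i), and let P be a set of n points of V(I). Define E_l = {ev_P(f) : f ∈ R, ρ(f) ≤ ρ_l}. Then the minimum distance of the evaluation code E_l is at least n - ρ_l, and if ρ_l < n then dim_{F_q}(E_l) = l. -/

import Mathlib

/-- An order function on an `F`-algebra `R`: `ρ : R → ℕ₀ ∪ {-∞}` with
(1) `ρ f = -∞ ↔ f = 0`; (2) invariance under nonzero scalars;
(3) `ρ (f+g) ≤ max (ρ f) (ρ g)`, with equality when `ρ f ≠ ρ g`;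
(4) `ρ f < ρ g` and `h ≠ 0` imply `ρ (f*h) < ρ (g*h)`;
(5) `ρ f = ρ g ≠ -∞` implies `ρ (f - λ g) < ρ g` for some scalar `λ ≠ 0`. -/
def IsOrderFunction (F : Type*) {R : Type*} [Field F] [CommRing R] [Algebra F R]
    (ρ : R → WithBot ℕ) : Prop :=
  (∀ f : R, ρ f = ⊥ ↔ f = 0) ∧
  (∀ (l : F) (f : R), l ≠ 0 → ρ (l • f) = ρ f) ∧
  (∀ f g : R, ρ (f + g) ≤ max (ρ f) (ρ g)) ∧
  (∀ f g : R, ρ f ≠ ρ g → ρ (f + g) = max (ρ f) (ρ g)) ∧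
  (∀ f g h : R, ρ f < ρ g → h ≠ 0 → ρ (f * h) < ρ (g * h)) ∧
  (∀ f g : R, ρ f = ρ g → ρ g ≠ ⊥ → ∃ l : F, l ≠ 0 ∧ ρ (f - l • g) < ρ g)

/-- A weight function is an order function additionally satisfying
multiplicativity: the value of a product is the sum of the values. -/
def IsWeightFunction (F : Type*) {R : Type*} [Field F] [CommRing R] [Algebra F R]
    (ρ : R → WithBot ℕ) : Prop :=
  IsOrderFunction F ρ ∧ ∀ f g : R, ρ (f * g) = ρ f + ρ g

section Aux

open Finset

variable {F R : Type*} [Field F] [CommRing R] [Algebra F R] {ρ : R → WithBot ℕ}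

lemma aux_rho_ne_bot (h : IsOrderFunction F ρ) {f : R} (hf : f ≠ 0) : ∃ v : ℕ, ρ f = (v : WithBot ℕ) := by
  cases hv : ρ f with
  | bot => exact absurd ((h.1 f).mp hv) hf
  | coe v => exact ⟨v, rfl⟩

/-- counting lemma for the numerical-semigroup argument -/
lemma aux_count (Γ : Set ℕ) (s : ℕ) (hadd : ∀ γ ∈ Γ, s + γ ∈ Γ)
    (t : ℕ) (v : Fin t → ℕ) (hinj : Function.Injective v)
    (hvΓ : ∀ j, v j ∈ Γ) (hvs : ∀ j, ∀ γ ∈ Γ, v j ≠ s + γ) : t ≤ s := by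
  classical
  set N : ℕ := s + (Finset.univ.sup v) with hN
  set A : Finset ℕ := Finset.image v Finset.univ with hA
  have hAcard : A.card = t := by
    rw [hA, Finset.card_image_of_injective _ hinj, Finset.card_univ, Fintype.card_fin]
  set B : Finset ℕ := (Finset.range (N + 1)).filter (· ∈ Γ) with hB
  set B' : Finset ℕ := (Finset.range (N - s + 1)).filter (· ∈ Γ) with hB'
  have hsub : A ∪ B'.image (· + s) ⊆ B := by
    intro x hx
    rcases Finset.mem_union.mp hx with hx | hx
    · rcases Finset.mem_image.mp hx with ⟨j, _, rfl⟩
      refine Finset.mem_filter.mpr ⟨Finset.mem_range.mpr ?_, hvΓ j⟩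
      have : v j ≤ Finset.univ.sup v := Finset.le_sup (Finset.mem_univ j)
      omega
    · rcases Finset.mem_image.mp hx with ⟨y, hy, rfl⟩
      rcases Finset.mem_filter.mp hy with ⟨hy1, hy2⟩
      have hy1' := Finset.mem_range.mp hy1
      refine Finset.mem_filter.mpr ⟨Finset.mem_range.mpr (by omega), ?_⟩
      have := hadd y hy2
      simpa [Nat.add_comm] using this
  have hdisj : Disjoint A (B'.image (· + s)) := by
    rw [Finset.disjoint_left]
    intro x hx hx'
    rcases Finset.mem_image.mp hx with ⟨j, _, rfl⟩
    rcases Finset.mem_image.mp hx' with ⟨y, hy, hyx⟩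
    exact hvs j y (Finset.mem_filter.mp hy).2 (by omega)
  have hcard1 : t + B'.card ≤ B.card := by
    have := Finset.card_le_card hsub
    rw [Finset.card_union_of_disjoint hdisj, hAcard,
      Finset.card_image_of_injective _ (add_left_injective s)] at this
    exact this
  have hcard2 : B.card ≤ B'.card + s := by
    have hsplit : B ⊆ B' ∪ Finset.Ico (N - s + 1) (N + 1) := by
      intro x hx
      rcases Finset.mem_filter.mp hx with ⟨hx1, hx2⟩
      have hx1' := Finset.mem_range.mp hx1
      by_cases hc : x ≤ N - s
      · exact Finset.mem_union_left _ (Finset.mem_filter.mpr ⟨Finset.mem_range.mpr (by omega), hx2⟩)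
      · exact Finset.mem_union_right _ (Finset.mem_Ico.mpr (by omega))
    calc B.card ≤ (B' ∪ Finset.Ico (N - s + 1) (N + 1)).card := Finset.card_le_card hsplit
      _ ≤ B'.card + (Finset.Ico (N - s + 1) (N + 1)).card := Finset.card_union_le _ _
      _ ≤ B'.card + s := by rw [Nat.card_Ico]; omega
  omega

/-- The key zeros lemma: a nonzero `f` has at most `ρ f` zeros among the
evaluation coordinates, assuming a separation property. -/
lemma aux_zeros [DecidableEq F] {n : ℕ} (h : IsWeightFunction F ρ) (ev : R →ₐ[F] (Fin n → F))
    (hsep : ∀ (T : Finset (Fin n)) (j : Fin n), j ∉ T →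
      ∃ g : R, (∀ i ∈ T, ev g i = 0) ∧ ev g j ≠ 0)
    (f : R) (hf : f ≠ 0) (s : ℕ) (hs : ρ f = (s : WithBot ℕ)) :
    (Finset.univ.filter (fun i => ev f i = 0)).card ≤ s := by
  classical
  obtain ⟨h1, h2, h3, h4, h5, h6⟩ := h.1
  have hmul := h.2
  set Z : Finset (Fin n) := Finset.univ.filter (fun i => ev f i = 0) with hZ
  set t : ℕ := Z.card with ht
  set q : Fin t → Fin n := fun k => ((Z.orderIsoOfFin rfl) k : Fin n) with hq
  have hqinj : Function.Injective q := fun a b hab => by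
    have := (Z.orderIsoOfFin rfl).injective (Subtype.ext hab); exact this
  have hqZ : ∀ k, q k ∈ Z := fun k => ((Z.orderIsoOfFin rfl) k).2
  -- D and S
  set Dp : ℕ → R → Prop := fun j g => ∀ k : Fin t, (k : ℕ) < j → ev g (q k) = 0 with hDp
  set S : ℕ → Set ℕ := fun j => {v | ∃ g, Dp j g ∧ g ≠ 0 ∧ ρ g = (v : WithBot ℕ)} with hS
  have hDanti : ∀ {j j' : ℕ}, j ≤ j' → ∀ {g}, Dp j' g → Dp j g := by
    intro j j' hjj g hg k hk; exact hg k (lt_of_lt_of_le hk hjj)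
  -- descent claim
  have claim2 : ∀ j : Fin t, ∃ v, v ∈ S j ∧ v ∉ S ((j : ℕ) + 1) := by
    intro j
    have hAne : ∃ v : ℕ, ∃ g, Dp (j : ℕ) g ∧ ev g (q j) ≠ 0 ∧ ρ g = (v : WithBot ℕ) := by
      obtain ⟨g, hg1, hg2⟩ := hsep ((Finset.univ.filter (fun k : Fin t => (k : ℕ) < (j : ℕ))).image q) (q j)
        (by
          intro hmem
          rcases Finset.mem_image.mp hmem with ⟨k, hk, hkq⟩
          have : k = j := hqinj hkq
          subst this
          exact absurd (Finset.mem_filter.mp hk).2 (lt_irrefl _))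
      have hgne : g ≠ 0 := by
        intro h0; apply hg2; rw [h0, map_zero]; rfl
      obtain ⟨v, hv⟩ := aux_rho_ne_bot ⟨h1, h2, h3, h4, h5, h6⟩ hgne
      exact ⟨v, g, (fun k hk => hg1 (q k) (Finset.mem_image.mpr ⟨k, Finset.mem_filter.mpr ⟨Finset.mem_univ _, hk⟩, rfl⟩)), hg2, hv⟩
    set v0 : ℕ := Nat.find hAne with hv0
    obtain ⟨g0, hg0D, hg0ne, hg0ρ⟩ := Nat.find_spec hAne
    have hg0nz : g0 ≠ 0 := by
      intro h0; apply hg0ne; rw [h0, map_zero]; rfl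
    refine ⟨v0, ⟨g0, hg0D, hg0nz, hg0ρ⟩, ?_⟩
    rintro ⟨g', hg'D, hg'nz, hg'ρ⟩
    obtain ⟨lam, hlam, hlt⟩ := h6 g0 g' (by rw [hg0ρ, hg'ρ]) (by rw [hg'ρ]; exact WithBot.coe_ne_bot)
    set g'' : R := g0 - lam • g' with hg''
    have hg''val : ev g'' (q j) = ev g0 (q j) := by
      have h0 : ev g' (q j) = 0 := hg'D j (by omega)
      rw [hg'', map_sub, map_smul]
      simp [h0]
    have hg''ne : ev g'' (q j) ≠ 0 := by rw [hg''val]; exact hg0ne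
    have hg''nz : g'' ≠ 0 := by
      intro h0; apply hg''ne; rw [h0, map_zero]; rfl
    obtain ⟨v'', hv''⟩ := aux_rho_ne_bot ⟨h1, h2, h3, h4, h5, h6⟩ hg''nz
    have hv''lt : v'' < v0 := by
      rw [hv'', hg'ρ] at hlt
      exact_mod_cast hlt
    have hg''D : Dp (j : ℕ) g'' := by
      intro k hk
      have h0 : ev g' (q k) = 0 := hg'D k (by omega)
      have h0' : ev g0 (q k) = 0 := hg0D k hk
      rw [hg'', map_sub, map_smul]
      simp [h0, h0']
    exact Nat.find_min hAne hv''lt ⟨g'', hg''D, hg''ne, hv''⟩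
  choose v hv1 hv2 using claim2
  have hSanti : ∀ {j j' : ℕ}, j ≤ j' → S j' ⊆ S j := by
    intro j j' hjj x ⟨g, hg, hgn, hgr⟩
    exact ⟨g, hDanti hjj hg, hgn, hgr⟩
  have hvinj : Function.Injective v := by
    intro a b hab
    by_contra hne
    rcases Ne.lt_or_gt hne with hab' | hab'
    · exact hv2 a (hab ▸ hSanti (by omega) (hv1 b))
    · exact hv2 b (hab ▸ hSanti (by omega) (hv1 a))
  -- Γ
  set Γ : Set ℕ := {x | ∃ g : R, g ≠ 0 ∧ ρ g = (x : WithBot ℕ)} with hΓ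
  have hmulnz : ∀ (a b : R), a ≠ 0 → b ≠ 0 → a * b ≠ 0 := by
    intro a b ha hb hab
    obtain ⟨va, hva⟩ := aux_rho_ne_bot ⟨h1, h2, h3, h4, h5, h6⟩ ha
    obtain ⟨vb, hvb⟩ := aux_rho_ne_bot ⟨h1, h2, h3, h4, h5, h6⟩ hb
    have := hmul a b
    rw [hab, hva, hvb, (h1 0).mpr rfl] at this
    exact absurd this.symm (by exact_mod_cast WithBot.coe_ne_bot)
  have hΓadd : ∀ γ ∈ Γ, s + γ ∈ Γ := by
    rintro γ ⟨g, hgn, hgr⟩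
    refine ⟨f * g, hmulnz f g hf hgn, ?_⟩
    rw [hmul, hs, hgr]
    exact_mod_cast rfl
  have hfD : ∀ (j : ℕ) (g : R), Dp j (f * g) := by
    intro j g k hk
    have : ev f (q k) = 0 := (Finset.mem_filter.mp (hqZ k)).2
    rw [map_mul]
    simp [Pi.mul_apply, this]
  have hvs : ∀ j, ∀ γ ∈ Γ, v j ≠ s + γ := by
    rintro j γ ⟨g, hgn, hgr⟩ heq
    apply hv2 j
    refine ⟨f * g, hfD _ g, hmulnz f g hf hgn, ?_⟩
    rw [hmul, hs, hgr, heq]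
    exact_mod_cast rfl
  have hvΓ : ∀ j, v j ∈ Γ := by
    intro j
    obtain ⟨g, _, hgn, hgr⟩ := hv1 j
    exact ⟨g, hgn, hgr⟩
  exact aux_count Γ s hΓadd t v hvinj hvΓ hvs


lemma aux_rho_sum (h : IsOrderFunction F ρ) {ι : Type*} [DecidableEq ι] (t : Finset ι) (g : ι → R) :
    ρ (∑ i ∈ t, g i) ≤ t.sup (fun i => ρ (g i)) := by
  induction t using Finset.induction_on with
  | empty => simp [(h.1 0).mpr rfl]
  | insert _ _ ha ih =>
      rw [Finset.sum_insert ha, Finset.sup_insert]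
      exact le_trans (h.2.2.1 _ _) (max_le_max le_rfl ih)

lemma aux_sep {F : Type*} [Field F] {m n : ℕ} (I : Ideal (MvPolynomial (Fin m) F))
    (P : Fin n → (Fin m → F)) (hinj : Function.Injective P)
    (ev : (MvPolynomial (Fin m) F ⧸ I) →ₐ[F] (Fin n → F))
    (hev : ∀ f, ev (Ideal.Quotient.mk I f) = fun i => MvPolynomial.eval (P i) f) :
    ∀ (T : Finset (Fin n)) (j : Fin n), j ∉ T →
      ∃ g : MvPolynomial (Fin m) F ⧸ I, (∀ i ∈ T, ev g i = 0) ∧ ev g j ≠ 0 := by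
  classical
  intro T j hj
  have hc : ∀ i : Fin n, i ∈ T → ∃ c : Fin m, P i c ≠ P j c := by
    intro i hi
    by_contra hcc
    push_neg at hcc
    exact hj ((hinj (funext hcc)) ▸ hi)
  choose c hcv using hc
  set p : MvPolynomial (Fin m) F :=
    ∏ i ∈ T.attach, (MvPolynomial.X (c i.1 i.2) - MvPolynomial.C (P i.1 (c i.1 i.2))) with hp
  have heval : ∀ k : Fin n, MvPolynomial.eval (P k) p =
      ∏ i ∈ T.attach, (P k (c i.1 i.2) - P i.1 (c i.1 i.2)) := by
    intro k
    rw [hp, map_prod]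
    apply Finset.prod_congr rfl
    intro i _
    simp
  refine ⟨Ideal.Quotient.mk I p, ?_, ?_⟩
  · intro i hi
    have := congrFun (hev p) i
    rw [this, heval]
    exact Finset.prod_eq_zero (Finset.mem_attach T ⟨i, hi⟩) (by simp)
  · have := congrFun (hev p) j
    rw [this, heval]
    apply Finset.prod_ne_zero_iff.mpr
    intro i _
    exact sub_ne_zero_of_ne (Ne.symm (hcv i.1 i.2))

end Aux

set_option maxHeartbeats 1000000 in
/-- The evaluation code `E_l = ev_P '' {f | ρ f ≤ ρ_l}` has minimum distance at
least `n - ρ_l`, and dimension `l` when `ρ_l < n`. -/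
theorem evaluation_code_parameters {F : Type*} [Field F] [Fintype F] [DecidableEq F]
    {m n : ℕ} (I : Ideal (MvPolynomial (Fin m) F))
    (ρ : (MvPolynomial (Fin m) F ⧸ I) → WithBot ℕ)
    (hρ : IsWeightFunction F ρ)
    (ρs : ℕ → ℕ)
    (hmono : ∀ i j, 1 ≤ i → i < j → ρs i < ρs j)
    (hrange : {x : ℕ | ∃ f : MvPolynomial (Fin m) F ⧸ I, f ≠ 0 ∧ ρ f = (x : WithBot ℕ)}
      = ρs '' {i | 1 ≤ i})
    (P : Fin n → (Fin m → F)) (hinj : Function.Injective P)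
    (hPV : ∀ i, ∀ f ∈ I, MvPolynomial.eval (P i) f = 0)
    (ev : (MvPolynomial (Fin m) F ⧸ I) →ₐ[F] (Fin n → F))
    (hev : ∀ f, ev (Ideal.Quotient.mk I f) = fun i => MvPolynomial.eval (P i) f)
    (l : ℕ) (hl : 1 ≤ l) :
    (∀ f, ρ f ≤ (ρs l : WithBot ℕ) → ev f ≠ 0 → n - ρs l ≤ hammingNorm (ev f)) ∧
    (ρs l < n → Module.finrank F
      (Submodule.span F (⇑ev '' {f | ρ f ≤ (ρs l : WithBot ℕ)})) = l) := by
  classical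
  obtain ⟨⟨h1, h2, h3, h4, h5, h6⟩, hmul⟩ := hρ
  have hρ' : IsWeightFunction F ρ := ⟨⟨h1, h2, h3, h4, h5, h6⟩, hmul⟩
  have hsep := aux_sep I P hinj ev hev
  constructor
  · -- distance bound
    intro f hfle hfne
    have hf0 : f ≠ 0 := by rintro rfl; simp at hfne
    obtain ⟨s, hs⟩ := aux_rho_ne_bot hρ'.1 hf0
    have hsle : s ≤ ρs l := by rw [hs] at hfle; exact_mod_cast hfle
    have hz := aux_zeros hρ' ev hsep f hf0 s hs
    have hsum : (Finset.univ.filter (fun i => ev f i = 0)).card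
        + (Finset.univ.filter (fun i => ¬ ev f i = 0)).card = n := by
      rw [Finset.card_filter_add_card_filter_not]
      simp
    have hham : hammingNorm (ev f) = (Finset.univ.filter (fun i => ¬ ev f i = 0)).card := by
      simp [hammingNorm, Ne]
    omega
  · -- dimension
    intro hln
    have hfam : ∀ k : Fin l, ∃ g : MvPolynomial (Fin m) F ⧸ I, g ≠ 0 ∧ ρ g = (ρs ((k : ℕ) + 1) : WithBot ℕ) := by
      intro k
      have : ρs ((k : ℕ) + 1) ∈ {x : ℕ | ∃ f : MvPolynomial (Fin m) F ⧸ I, f ≠ 0 ∧ ρ f = (x : WithBot ℕ)} := by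
        rw [hrange]; exact ⟨(k : ℕ) + 1, Nat.succ_le_succ (Nat.zero_le _), rfl⟩
      exact this
    choose fam hfamne hfamρ using hfam
    set Lset : Set (MvPolynomial (Fin m) F ⧸ I) := {f | ρ f ≤ (ρs l : WithBot ℕ)} with hLset
    set M : Submodule F (MvPolynomial (Fin m) F ⧸ I) := Submodule.span F (Set.range fam) with hM
    have hfamL : ∀ k : Fin l, ρ (fam k) ≤ (ρs l : WithBot ℕ) := by
      intro k
      rw [hfamρ k]
      rcases eq_or_lt_of_le (show (k : ℕ) + 1 ≤ l by omega) with he | hlt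
      · rw [he]
      · exact_mod_cast le_of_lt (hmono _ _ (by omega) hlt)
    have hspan : ∀ v : ℕ, ∀ f : MvPolynomial (Fin m) F ⧸ I, ρ f = (v : WithBot ℕ) → v ≤ ρs l → f ∈ M := by
      intro v
      induction v using Nat.strong_induction_on with
      | _ v ih =>
        intro f hfv hvle
        have hfne : f ≠ 0 := by
          rintro rfl
          rw [(h1 0).mpr rfl] at hfv
          exact WithBot.bot_ne_coe hfv
        have hvΓ : v ∈ ρs '' {i | 1 ≤ i} := by rw [← hrange]; exact ⟨f, hfne, hfv⟩
        obtain ⟨i, hi1, hieq⟩ := hvΓ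
        have hi1' : 1 ≤ i := hi1
        have hil : i ≤ l := by
          by_contra hgt
          have := hmono l i hl (by omega)
          omega
        set k : Fin l := ⟨i - 1, by omega⟩ with hk
        have hki : (k : ℕ) + 1 = i := by simp [hk]; omega
        have heqρ : ρ f = ρ (fam k) := by rw [hfv, hfamρ, hki, hieq]
        obtain ⟨lam, hlam, hlt⟩ := h6 f (fam k) heqρ (by rw [hfamρ]; exact WithBot.coe_ne_bot)
        by_cases hz : f - lam • fam k = 0
        · have hfe : f = lam • fam k := by rwa [sub_eq_zero] at hz
          rw [hfe]
          exact M.smul_mem _ (Submodule.subset_span ⟨k, rfl⟩)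
        · obtain ⟨v', hv'⟩ := aux_rho_ne_bot hρ'.1 hz
          have hv'lt : v' < v := by
            rw [hv', hfamρ, hki, hieq] at hlt
            exact_mod_cast hlt
          have hmem := ih v' hv'lt _ hv' (by omega)
          have hfe : f = (f - lam • fam k) + lam • fam k := by rw [sub_add_cancel]
          rw [hfe]
          exact M.add_mem hmem (M.smul_mem _ (Submodule.subset_span ⟨k, rfl⟩))
    have hMle : ∀ g ∈ M, ρ g ≤ (ρs l : WithBot ℕ) := by
      have hLsub : ∃ Lsub : Submodule F (MvPolynomial (Fin m) F ⧸ I), (Lsub : Set (MvPolynomial (Fin m) F ⧸ I)) = Lset := by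
        refine ⟨{ carrier := Lset
                  add_mem' := ?_
                  zero_mem' := ?_
                  smul_mem' := ?_ }, rfl⟩
        · intro a b ha hb
          exact le_trans (h3 a b) (max_le ha hb)
        · show ρ 0 ≤ _
          rw [(h1 0).mpr rfl]
          exact bot_le
        · intro cc a ha
          by_cases hc : cc = 0
          · show ρ (cc • a) ≤ _
            rw [hc, zero_smul, (h1 0).mpr rfl]
            exact bot_le
          · show ρ (cc • a) ≤ _
            rw [h2 cc a hc]
            exact ha
      obtain ⟨Lsub, hLs⟩ := hLsub
      have : M ≤ Lsub := by
        rw [hM, Submodule.span_le, hLs]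
        rintro x ⟨k, rfl⟩
        exact hfamL k
      intro g hg
      have h' : g ∈ (Lsub : Set (MvPolynomial (Fin m) F ⧸ I)) := this hg
      rw [hLs] at h'
      exact h'
    have hLM : Lset = (M : Set (MvPolynomial (Fin m) F ⧸ I)) := by
      apply Set.eq_of_subset_of_subset
      · intro g hg
        by_cases hg0 : g = 0
        · rw [hg0]; exact M.zero_mem
        · obtain ⟨v, hv⟩ := aux_rho_ne_bot hρ'.1 hg0
          have hg' : ρ g ≤ (ρs l : WithBot ℕ) := hg
          rw [hv] at hg'
          exact hspan v g hv (by exact_mod_cast hg')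
      · intro g hg
        exact hMle g hg
    have hcoe : ⇑ev.toLinearMap = ⇑ev := rfl
    have hE : Submodule.span F (⇑ev '' Lset) = Submodule.span F (Set.range (⇑ev ∘ fam)) := by
      rw [← hcoe, hLM, Submodule.span_image, Submodule.span_eq, hM, ← Submodule.span_image,
        ← Set.range_comp]
    have hind : LinearIndependent F fam := by
      rw [Fintype.linearIndependent_iff]
      intro cf hc
      by_contra hcne
      push_neg at hcne
      obtain ⟨i0, hi0⟩ := hcne
      set T : Finset (Fin l) := Finset.univ.filter (fun i => cf i ≠ 0) with hT
      have hTne : T.Nonempty := ⟨i0, by simp [hT, hi0]⟩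
      set i1 := T.max' hTne with hi1
      have hc1 : cf i1 ≠ 0 := (Finset.mem_filter.mp (T.max'_mem hTne)).2
      have hrest : ρ (∑ i ∈ Finset.univ.erase i1, cf i • fam i) < (ρs ((i1 : ℕ) + 1) : WithBot ℕ) := by
        refine lt_of_le_of_lt (aux_rho_sum hρ'.1 _ _) ?_
        rw [Finset.sup_lt_iff (by exact_mod_cast bot_lt_iff_ne_bot.mpr WithBot.coe_ne_bot)]
        intro i hi
        by_cases hci : cf i = 0
        · rw [hci, zero_smul, (h1 0).mpr rfl]
          exact bot_lt_iff_ne_bot.mpr WithBot.coe_ne_bot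
        · rw [h2 _ _ hci, hfamρ]
          have hiT : i ∈ T := Finset.mem_filter.mpr ⟨Finset.mem_univ _, hci⟩
          have hile : i ≤ i1 := T.le_max' i hiT
          have hine : i ≠ i1 := Finset.ne_of_mem_erase hi
          have : (i : ℕ) < (i1 : ℕ) := by
            rcases lt_or_eq_of_le hile with hlt | heq
            · exact_mod_cast hlt
            · exact absurd heq hine
          exact_mod_cast hmono ((i : ℕ) + 1) ((i1 : ℕ) + 1) (by omega) (by omega)
      have hρ1 : ρ (cf i1 • fam i1) = (ρs ((i1 : ℕ) + 1) : WithBot ℕ) := by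
        rw [h2 _ _ hc1, hfamρ]
      have hs0 : ∑ i, cf i • fam i
          = cf i1 • fam i1 + ∑ i ∈ Finset.univ.erase i1, cf i • fam i :=
        (Finset.add_sum_erase _ _ (Finset.mem_univ i1)).symm
      have h40 := h4 (cf i1 • fam i1) (∑ i ∈ Finset.univ.erase i1, cf i • fam i)
        (by rw [hρ1]; exact ne_of_gt hrest)
      rw [← hs0, hc, (h1 0).mpr rfl, hρ1, max_eq_left (le_of_lt (hρ1 ▸ hrest))] at h40
      exact WithBot.bot_ne_coe h40
    have hdisj : Disjoint M (LinearMap.ker ev.toLinearMap) := by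
      rw [Submodule.disjoint_def]
      intro x hxM hxk
      by_contra hx0
      obtain ⟨v, hv⟩ := aux_rho_ne_bot hρ'.1 hx0
      have hvle : v ≤ ρs l := by
        have := hMle x hxM
        rw [hv] at this
        exact_mod_cast this
      have hz := aux_zeros hρ' ev hsep x hx0 v hv
      have hev0 : ev x = 0 := LinearMap.mem_ker.mp hxk
      have : (Finset.univ.filter (fun i => ev x i = 0)).card = n := by
        rw [hev0]
        simp
      omega
    have hindE : LinearIndependent F (⇑ev ∘ fam) := by
      have := hind.map (f := ev.toLinearMap) (by rw [← hM]; exact hdisj)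
      rwa [hcoe] at this
    rw [hE, finrank_span_eq_card hindE, Fintype.card_fin]
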